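/- The sequence (Λ_n(A))_{n∈ℕ}, where Λ_n(A) := K_n(A)^{−1} with K_n(A) := ∑_{τ ⪯ σ(n)} φ_τ(A) φ_τ(A)^*, is nonincreasing in the Loewner order (Λ_m(A) ⪯ Λ_n(A) for m ≥ n) and converges entrywise to a positive semidefinite matrix Λ_∞(A). Moreover: (i) Λ_∞(A) ⪯ M(c) for every n ∈ ℕ and every n-admissible family c for A; and (ii) if W is a Hermitian k×k matrix with W ⪯ M(c) for every n ∈ ℕ and every n-admissible family c for A, then W ⪯ Λ_∞(A). Thus Λ_∞(A) is the Loewner infimum of the set {M(c) : n ∈ ℕ, c n-admissible for A}. -/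

import Mathlib

open scoped BigOperators ComplexOrder

/-- `L^σ = L_{σ_1} ⋯ L_{σ_n}` for a word `σ` over the alphabet of `d` generators. -/
noncomputable def Lword {d : ℕ} {H : Type*} [NormedAddCommGroup H] [InnerProductSpace ℂ H]
    (L : Fin d → H →L[ℂ] H) (σ : List (Fin d)) : H →L[ℂ] H :=
  (σ.map L).prod

/-- Evaluation of a noncommutative polynomial at the tuple `L` of operators. -/
noncomputable def evalL {d : ℕ} {H : Type*} [NormedAddCommGroup H] [InnerProductSpace ℂ H]
    (L : Fin d → H →L[ℂ] H) : FreeAlgebra ℂ (Fin d) →ₐ[ℂ] (H →L[ℂ] H) :=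
  FreeAlgebra.lift ℂ L

/-- Evaluation of a noncommutative polynomial at a `d`-tuple `A` of `k×k` matrices. -/
noncomputable def evalA {d k : ℕ} (A : Fin d → Matrix (Fin k) (Fin k) ℂ) :
    FreeAlgebra ℂ (Fin d) →ₐ[ℂ] Matrix (Fin k) (Fin k) ℂ :=
  FreeAlgebra.lift ℂ A

/-- `A^τ = A_{τ_1} ⋯ A_{τ_m}` for a word `τ`. -/
noncomputable def Aword {d k : ℕ} (A : Fin d → Matrix (Fin k) (Fin k) ℂ)
    (τ : List (Fin d)) : Matrix (Fin k) (Fin k) ℂ :=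
  (τ.map A).prod

/-- A family `c : F_d^+ → M_k(ℂ)` is `n`-admissible for `A` if `c_τ = 0` unless `τ ⪯ σ(n)`
(equivalently `|τ| ≤ n`), and `∑_{τ ⪯ σ(n)} A^τ c_τ = I_k`.  Words of length `l` are
enumerated as `List.ofFn f` for `f : Fin l → Fin d`. -/
def Admissible {d k : ℕ} (A : Fin d → Matrix (Fin k) (Fin k) ℂ) (n : ℕ)
    (c : List (Fin d) → Matrix (Fin k) (Fin k) ℂ) : Prop :=
  (∀ τ : List (Fin d), n < τ.length → c τ = 0) ∧
  (∑ l ∈ Finset.range (n + 1), ∑ f : Fin l → Fin d,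
      Aword A (List.ofFn f) * c (List.ofFn f)) = 1

/-- `M(c) := ∑_{σ,τ ⪯ σ(n)} μ((L^σ)^* L^τ) c_σ^* c_τ`. -/
noncomputable def Mval {d k : ℕ} {H : Type*} [NormedAddCommGroup H]
    [InnerProductSpace ℂ H] [CompleteSpace H] (L : Fin d → H →L[ℂ] H)
    (μ : (H →L[ℂ] H) →ₗ[ℂ] ℂ) (n : ℕ)
    (c : List (Fin d) → Matrix (Fin k) (Fin k) ℂ) : Matrix (Fin k) (Fin k) ℂ :=
  ∑ l ∈ Finset.range (n + 1), ∑ f : Fin l → Fin d,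
    ∑ l' ∈ Finset.range (n + 1), ∑ g : Fin l' → Fin d,
      μ (star (Lword L (List.ofFn f)) * Lword L (List.ofFn g)) •
        (star (c (List.ofFn f)) * c (List.ofFn g))

/-- The Christoffel–Darboux kernel `K_n(A) := ∑_{τ ⪯ σ(n)} φ_τ(A) φ_τ(A)^*`. -/
noncomputable def Kmat {d k : ℕ} (φ : List (Fin d) → FreeAlgebra ℂ (Fin d))
    (A : Fin d → Matrix (Fin k) (Fin k) ℂ) (n : ℕ) : Matrix (Fin k) (Fin k) ℂ :=
  ∑ l ∈ Finset.range (n + 1), ∑ f : Fin l → Fin d,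
    evalA A (φ (List.ofFn f)) * star (evalA A (φ (List.ofFn f)))

namespace Chr


/-- Index type for words of length ≤ n. -/
abbrev WIdx (d n : ℕ) := (l : Fin (n+1)) × (Fin (l : ℕ) → Fin d)

def wd {d n : ℕ} (i : WIdx d n) : List (Fin d) := List.ofFn i.2

lemma wd_length {d n : ℕ} (i : WIdx d n) : (wd i).length = (i.1 : ℕ) := by
  simp [wd]

lemma wd_length_le {d n : ℕ} (i : WIdx d n) : (wd i).length ≤ n := by
  rw [wd_length]; exact Nat.lt_succ_iff.mp i.1.isLt

lemma wd_injective {d n : ℕ} : Function.Injective (wd (d := d) (n := n)) := by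
  rintro ⟨l, f⟩ ⟨l', f'⟩ h
  have hl : (l : ℕ) = (l' : ℕ) := by
    have := congrArg List.length h
    simpa [wd] using this
  have hl2 : l = l' := Fin.ext hl
  subst hl2
  simpa [wd, List.ofFn_inj] using h

def toIdx {d n : ℕ} (τ : List (Fin d)) (h : τ.length ≤ n) : WIdx d n :=
  ⟨⟨τ.length, Nat.lt_succ_of_le h⟩, τ.get⟩

lemma wd_toIdx {d n : ℕ} (τ : List (Fin d)) (h : τ.length ≤ n) : wd (toIdx τ h) = τ :=
  List.ofFn_get τ

lemma toIdx_wd {d n : ℕ} (i : WIdx d n) (h : (wd i).length ≤ n) : toIdx (wd i) h = i :=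
  wd_injective (wd_toIdx _ _)

lemma range_wd {d n : ℕ} : Set.range (wd (d := d) (n := n)) = {τ : List (Fin d) | τ.length ≤ n} := by
  ext τ
  constructor
  · rintro ⟨i, rfl⟩; exact wd_length_le i
  · intro h; exact ⟨toIdx τ h, wd_toIdx τ h⟩

lemma sum_wd {d n : ℕ} {M : Type*} [AddCommMonoid M] (F : List (Fin d) → M) :
    (∑ l ∈ Finset.range (n+1), ∑ f : Fin l → Fin d, F (List.ofFn f))
      = ∑ i : WIdx d n, F (wd i) := by
  rw [Finset.sum_range (n := n+1) (fun l => ∑ f : Fin l → Fin d, F (List.ofFn f))]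
  rw [show (∑ i : WIdx d n, F (wd i)) = ∑ l : Fin (n+1), ∑ f : Fin (l:ℕ) → Fin d, F (wd ⟨l, f⟩) from
    Finset.sum_sigma _ _ _]
  rfl

lemma posSemidef_sum {k : ℕ} {ι : Type*} (s : Finset ι) (F : ι → Matrix (Fin k) (Fin k) ℂ)
    (h : ∀ i ∈ s, (F i).PosSemidef) : (∑ i ∈ s, F i).PosSemidef := by
  classical
  induction s using Finset.induction_on with
  | empty => simpa using Matrix.PosSemidef.zero
  | insert a s hni ih =>
    rw [Finset.sum_insert hni]
    exact (h a (Finset.mem_insert_self a s)).add (ih fun i hi => h i (Finset.mem_insert_of_mem hi))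


variable {d k : ℕ} {H : Type*} [NormedAddCommGroup H] [InnerProductSpace ℂ H] [CompleteSpace H]

lemma evalL_mono (L : Fin d → H →L[ℂ] H) (τ : List (Fin d)) :
    evalL L ((τ.map (FreeAlgebra.ι ℂ)).prod) = Lword L τ := by
  rw [map_list_prod, List.map_map, Lword]
  refine congrArg List.prod (List.map_congr_left fun x _ => ?_)
  simp [evalL, FreeAlgebra.lift_ι_apply]

lemma evalA_mono (A : Fin d → Matrix (Fin k) (Fin k) ℂ) (τ : List (Fin d)) :
    evalA A ((τ.map (FreeAlgebra.ι ℂ)).prod) = Aword A τ := by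
  rw [map_list_prod, List.map_map, Aword]
  refine congrArg List.prod (List.map_congr_left fun x _ => ?_)
  simp [evalA, FreeAlgebra.lift_ι_apply]

set_option maxHeartbeats 1000000 in
lemma core (L : Fin d → H →L[ℂ] H) (μ : (H →L[ℂ] H) →ₗ[ℂ] ℂ)
    (φ : List (Fin d) → FreeAlgebra ℂ (Fin d)) (hφ0 : φ [] = 1)
    (horth : ∀ σ τ : List (Fin d),
      μ (star (evalL L (φ τ)) * evalL L (φ σ)) = if σ = τ then 1 else 0)
    (hspan : ∀ n : ℕ,
      Submodule.span ℂ (φ '' {τ : List (Fin d) | τ.length ≤ n}) =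
        Submodule.span ℂ
          ((fun τ : List (Fin d) => (τ.map (FreeAlgebra.ι ℂ)).prod) ''
            {τ : List (Fin d) | τ.length ≤ n}))
    (A : Fin d → Matrix (Fin k) (Fin k) ℂ) (n : ℕ) :
    (Kmat φ A n).PosDef ∧
    (∃ c, Admissible A n c ∧ Mval L μ n c = (Kmat φ A n)⁻¹) ∧
    (∀ c, Admissible A n c → (Mval L μ n c - (Kmat φ A n)⁻¹).PosSemidef) := by
  classical
  -- the two span sets, as ranges over `WIdx d n`
  have hsets1 : (φ '' {τ : List (Fin d) | τ.length ≤ n})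
      = Set.range (fun i : WIdx d n => φ (wd i)) := by
    rw [← range_wd, ← Set.range_comp]; rfl
  have hsets2 : ((fun τ : List (Fin d) => (τ.map (FreeAlgebra.ι ℂ)).prod) ''
      {τ : List (Fin d) | τ.length ≤ n})
      = Set.range (fun i : WIdx d n => ((wd i).map (FreeAlgebra.ι ℂ)).prod) := by
    rw [← range_wd, ← Set.range_comp]; rfl
  -- coefficients expressing monomials in terms of the φ's
  have hspan1 : ∀ i : WIdx d n, ∃ cf : WIdx d n → ℂ,
      ∑ j, cf j • φ (wd j) = ((wd i).map (FreeAlgebra.ι ℂ)).prod := by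
    intro i
    have hmem : ((wd i).map (FreeAlgebra.ι ℂ)).prod ∈
        Submodule.span ℂ (Set.range fun j : WIdx d n => φ (wd j)) := by
      rw [← hsets1, hspan n]
      exact Submodule.subset_span ⟨wd i, wd_length_le i, rfl⟩
    exact (Submodule.mem_span_range_iff_exists_fun ℂ).mp hmem
  choose a ha using hspan1
  -- coefficients expressing the φ's in terms of monomials
  have hspan2 : ∀ i : WIdx d n, ∃ cf : WIdx d n → ℂ,
      ∑ j, cf j • ((wd j).map (FreeAlgebra.ι ℂ)).prod = φ (wd i) := by
    intro i
    have hmem : φ (wd i) ∈ Submodule.span ℂ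
        (Set.range fun j : WIdx d n => ((wd j).map (FreeAlgebra.ι ℂ)).prod) := by
      rw [← hsets2, ← hspan n]
      exact Submodule.subset_span ⟨wd i, wd_length_le i, rfl⟩
    exact (Submodule.mem_span_range_iff_exists_fun ℂ).mp hmem
  choose b hb using hspan2
  set P : WIdx d n → (H →L[ℂ] H) := fun j => evalL L (φ (wd j)) with hP
  set Φ : WIdx d n → Matrix (Fin k) (Fin k) ℂ := fun j => evalA A (φ (wd j)) with hΦ
  have horth' : ∀ j j' : WIdx d n, μ (star (P j) * P j') = if j' = j then 1 else 0 := by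
    intro j j'
    rw [hP]
    rw [horth (wd j') (wd j)]
    simp [wd_injective.eq_iff]
  -- linear independence of the φ's
  have hli : ∀ g : WIdx d n → ℂ, (∑ j, g j • φ (wd j)) = 0 → ∀ j, g j = 0 := by
    intro g hg j
    have h0 : (∑ j', g j' • P j') = 0 := by
      have := congrArg (evalL L) hg
      simpa [map_sum, map_smul] using this
    have h1 := congrArg (fun x => μ (star (P j) * x)) h0
    simp only [mul_zero, map_zero] at h1
    rw [Finset.mul_sum] at h1
    simp only [mul_smul_comm, map_sum, map_smul, horth', smul_eq_mul, mul_ite, mul_one,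
      mul_zero, Finset.sum_ite_eq', Finset.mem_univ, if_true] at h1
    exact h1
  -- duality between the coefficient families
  have hdual : ∀ m j : WIdx d n, (∑ i, b m i * a i j) = if j = m then 1 else 0 := by
    intro m j
    have h1 : ∑ j', (∑ i, b m i * a i j') • φ (wd j') = φ (wd m) := by
      calc ∑ j', (∑ i, b m i * a i j') • φ (wd j')
          = ∑ j', ∑ i, (b m i * a i j') • φ (wd j') := by
            simp_rw [Finset.sum_smul]
        _ = ∑ i, ∑ j', (b m i * a i j') • φ (wd j') := Finset.sum_comm
        _ = ∑ i, b m i • ∑ j', a i j' • φ (wd j') := by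
            simp_rw [Finset.smul_sum, smul_smul]
        _ = ∑ i, b m i • ((wd i).map (FreeAlgebra.ι ℂ)).prod := by
            simp_rw [ha]
        _ = φ (wd m) := hb m
    have h2 : ∑ j', ((∑ i, b m i * a i j') - (if j' = m then 1 else 0)) • φ (wd j') = 0 := by
      simp only [sub_smul, Finset.sum_sub_distrib, h1, ite_smul, one_smul, zero_smul,
        Finset.sum_ite_eq', Finset.mem_univ, if_true, sub_self]
    have := hli _ h2 j
    exact sub_eq_zero.mp this
  -- the moment formula
  have hlw : ∀ i : WIdx d n, Lword L (wd i) = ∑ j, a i j • P j := by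
    intro i
    rw [← evalL_mono, ← ha i, map_sum]
    simp_rw [map_smul]
    rfl
  have moment : ∀ i i' : WIdx d n,
      μ (star (Lword L (wd i)) * Lword L (wd i')) = ∑ j, star (a i j) * a i' j := by
    intro i i'
    rw [hlw, hlw, star_sum]
    simp_rw [star_smul, Finset.sum_mul, Finset.mul_sum, smul_mul_assoc, mul_smul_comm,
      map_sum, map_smul, horth']
    simp [smul_eq_mul, mul_ite, Finset.sum_ite_eq', RCLike.star_def]
  -- expansion of Aword
  have hAw : ∀ i : WIdx d n, Aword A (wd i) = ∑ j, a i j • Φ j := by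
    intro i
    rw [← evalA_mono, ← ha i, map_sum]
    simp_rw [map_smul]
    rfl
  -- Kmat as a sum over WIdx
  have hK : Kmat φ A n = ∑ j, Φ j * star (Φ j) := by
    rw [Kmat, sum_wd (fun τ => evalA A (φ τ) * star (evalA A (φ τ)))]
  -- Kmat is positive definite
  have hj0 : wd (toIdx ([] : List (Fin d)) (by simp) : WIdx d n) = [] := wd_toIdx _ _
  have hKpd : (Kmat φ A n).PosDef := by
    rw [hK]
    set j0 : WIdx d n := toIdx ([] : List (Fin d)) (by simp)
    rw [← Finset.add_sum_erase Finset.univ _ (Finset.mem_univ j0)]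
    have h1 : Φ j0 * star (Φ j0) = 1 := by
      have : Φ j0 = 1 := by rw [hΦ]; simp only [hj0, hφ0, map_one]
      rw [this]; simp
    rw [h1]
    refine Matrix.PosDef.add_posSemidef Matrix.PosDef.one ?_
    refine posSemidef_sum _ _ fun j _ => ?_
    rw [Matrix.star_eq_conjTranspose]
    exact Matrix.posSemidef_self_mul_conjTranspose _
  have hKdet : IsUnit (Kmat φ A n).det := by
    have := hKpd.det_pos
    exact isUnit_iff_ne_zero.mpr (by exact_mod_cast this.ne')
  have hKK : Kmat φ A n * (Kmat φ A n)⁻¹ = 1 := Matrix.mul_nonsing_inv _ hKdet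
  have hKK' : (Kmat φ A n)⁻¹ * Kmat φ A n = 1 := Matrix.nonsing_inv_mul _ hKdet
  have hKinvH : ((Kmat φ A n)⁻¹).conjTranspose = (Kmat φ A n)⁻¹ := hKpd.inv.isHermitian
  -- V
  set V : (List (Fin d) → Matrix (Fin k) (Fin k) ℂ) → WIdx d n → Matrix (Fin k) (Fin k) ℂ :=
    fun c j => ∑ i, a i j • c (wd i) with hV
  -- Mval as a sum of (V c j)ᴴ * (V c j)
  have hMval : ∀ c, Mval L μ n c = ∑ j, star (V c j) * V c j := by
    intro c
    have e1 : Mval L μ n c = ∑ i : WIdx d n, ∑ i' : WIdx d n,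
        μ (star (Lword L (wd i)) * Lword L (wd i')) • (star (c (wd i)) * c (wd i')) := by
      rw [Mval, sum_wd (fun σ => ∑ l' ∈ Finset.range (n + 1), ∑ g : Fin l' → Fin d,
        μ (star (Lword L σ) * Lword L (List.ofFn g)) • (star (c σ) * c (List.ofFn g)))]
      refine Finset.sum_congr rfl fun i _ => ?_
      rw [sum_wd (fun τ => μ (star (Lword L (wd i)) * Lword L τ) • (star (c (wd i)) * c τ))]
    rw [e1]
    simp_rw [moment]
    calc ∑ i : WIdx d n, ∑ i' : WIdx d n, (∑ j, star (a i j) * a i' j) •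
          (star (c (wd i)) * c (wd i'))
        = ∑ i : WIdx d n, ∑ i' : WIdx d n, ∑ j, (star (a i j) * a i' j) •
          (star (c (wd i)) * c (wd i')) := by simp_rw [Finset.sum_smul]
      _ = ∑ j, ∑ i : WIdx d n, ∑ i' : WIdx d n, (star (a i j) * a i' j) •
          (star (c (wd i)) * c (wd i')) := by
            rw [show (∑ i : WIdx d n, ∑ i' : WIdx d n, ∑ j : WIdx d n, (star (a i j) * a i' j) •
                (star (c (wd i)) * c (wd i')))
                = ∑ i : WIdx d n, ∑ j : WIdx d n, ∑ i' : WIdx d n, (star (a i j) * a i' j) •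
                (star (c (wd i)) * c (wd i')) from
              Finset.sum_congr rfl fun i _ => Finset.sum_comm]
            exact Finset.sum_comm
      _ = ∑ j, star (V c j) * V c j := by
            refine Finset.sum_congr rfl fun j _ => ?_
            rw [hV]
            simp only [star_sum, star_smul, Finset.sum_mul, Finset.mul_sum]
            rw [Finset.sum_comm]
            refine Finset.sum_congr rfl fun i _ => Finset.sum_congr rfl fun i' _ => ?_
            rw [smul_mul_assoc, mul_smul_comm, smul_smul, RCLike.star_def]
  -- the admissibility sum in terms of V
  have hadm : ∀ c, (∑ l ∈ Finset.range (n + 1), ∑ f : Fin l → Fin d,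
      Aword A (List.ofFn f) * c (List.ofFn f)) = ∑ j, Φ j * V c j := by
    intro c
    rw [sum_wd (fun τ => Aword A τ * c τ)]
    calc ∑ i : WIdx d n, Aword A (wd i) * c (wd i)
        = ∑ i : WIdx d n, ∑ j, a i j • (Φ j * c (wd i)) := by
          refine Finset.sum_congr rfl fun i _ => ?_
          rw [hAw i, Finset.sum_mul]
          simp_rw [smul_mul_assoc]
      _ = ∑ j, ∑ i : WIdx d n, a i j • (Φ j * c (wd i)) := Finset.sum_comm
      _ = ∑ j, Φ j * V c j := by
          refine Finset.sum_congr rfl fun j _ => ?_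
          rw [hV, Finset.mul_sum]
          simp_rw [mul_smul_comm]
  have hstar : ∀ j : WIdx d n, star (star (Φ j) * (Kmat φ A n)⁻¹) = (Kmat φ A n)⁻¹ * Φ j := by
    intro j
    rw [star_mul, star_star, Matrix.star_eq_conjTranspose, hKinvH]
  have hKinvsum : ∑ j, (Kmat φ A n)⁻¹ * (Φ j * star (Φ j)) * (Kmat φ A n)⁻¹
      = (Kmat φ A n)⁻¹ := by
    calc ∑ j, (Kmat φ A n)⁻¹ * (Φ j * star (Φ j)) * (Kmat φ A n)⁻¹
        = ((Kmat φ A n)⁻¹ * ∑ j, Φ j * star (Φ j)) * (Kmat φ A n)⁻¹ := by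
          rw [← Finset.sum_mul, ← Finset.mul_sum]
      _ = (Kmat φ A n)⁻¹ := by rw [← hK, hKK', one_mul]
  refine ⟨hKpd, ?_, ?_⟩
  · -- optimal admissible family
    set c0 : List (Fin d) → Matrix (Fin k) (Fin k) ℂ := fun τ =>
      if h : τ.length ≤ n then ∑ i, b i (toIdx τ h) • (star (Φ i) * (Kmat φ A n)⁻¹)
      else 0 with hc0
    have hc0wd : ∀ j : WIdx d n,
        c0 (wd j) = ∑ i, b i j • (star (Φ i) * (Kmat φ A n)⁻¹) := by
      intro j
      rw [hc0]
      simp only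
      rw [dif_pos (wd_length_le j), toIdx_wd]
    have hVc0 : ∀ j : WIdx d n, V c0 j = star (Φ j) * (Kmat φ A n)⁻¹ := by
      intro j
      show ∑ i, a i j • c0 (wd i) = star (Φ j) * (Kmat φ A n)⁻¹
      calc ∑ i, a i j • c0 (wd i)
          = ∑ i, ∑ m, (b m i * a i j) • (star (Φ m) * (Kmat φ A n)⁻¹) := by
            refine Finset.sum_congr rfl fun i _ => ?_
            rw [hc0wd i, Finset.smul_sum]
            refine Finset.sum_congr rfl fun m _ => ?_
            rw [smul_smul, mul_comm]
        _ = ∑ m, (∑ i, b m i * a i j) • (star (Φ m) * (Kmat φ A n)⁻¹) := by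
            rw [Finset.sum_comm]; simp_rw [Finset.sum_smul]
        _ = star (Φ j) * (Kmat φ A n)⁻¹ := by
            simp_rw [hdual]
            simp [ite_smul]
    have hΦV : ∑ j, Φ j * V c0 j = 1 := by
      simp_rw [hVc0]
      calc ∑ j, Φ j * (star (Φ j) * (Kmat φ A n)⁻¹)
          = (∑ j, Φ j * star (Φ j)) * (Kmat φ A n)⁻¹ := by
            rw [Finset.sum_mul]; simp_rw [mul_assoc]
        _ = 1 := by rw [← hK, hKK]
    refine ⟨c0, ⟨?_, ?_⟩, ?_⟩
    · intro τ hτ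
      rw [hc0]
      simp only
      rw [dif_neg (by omega)]
    · rw [hadm c0, hΦV]
    · rw [hMval c0]
      simp_rw [hVc0]
      calc ∑ j, star (star (Φ j) * (Kmat φ A n)⁻¹) * (star (Φ j) * (Kmat φ A n)⁻¹)
          = ∑ j, (Kmat φ A n)⁻¹ * (Φ j * star (Φ j)) * (Kmat φ A n)⁻¹ := by
            refine Finset.sum_congr rfl fun j _ => ?_
            rw [hstar j]
            simp only [mul_assoc]
        _ = (Kmat φ A n)⁻¹ := hKinvsum
  · -- the key inequality
    intro c hc
    have hΦV1 : ∑ j, Φ j * V c j = 1 := by rw [← hadm c]; exact hc.2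
    have expand : ∀ j : WIdx d n,
        star (V c j - star (Φ j) * (Kmat φ A n)⁻¹) * (V c j - star (Φ j) * (Kmat φ A n)⁻¹)
          = star (V c j) * V c j - star (V c j) * (star (Φ j) * (Kmat φ A n)⁻¹)
            - ((Kmat φ A n)⁻¹ * Φ j) * V c j
            + (Kmat φ A n)⁻¹ * (Φ j * star (Φ j)) * (Kmat φ A n)⁻¹ := by
      intro j
      rw [star_sub, hstar j]
      have h4 : ((Kmat φ A n)⁻¹ * Φ j) * (star (Φ j) * (Kmat φ A n)⁻¹)
          = (Kmat φ A n)⁻¹ * (Φ j * star (Φ j)) * (Kmat φ A n)⁻¹ := by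
        simp only [mul_assoc]
      rw [sub_mul, mul_sub, mul_sub, h4]
      abel
    have h1 : ∑ j, star (V c j) * (star (Φ j) * (Kmat φ A n)⁻¹) = (Kmat φ A n)⁻¹ := by
      calc ∑ j, star (V c j) * (star (Φ j) * (Kmat φ A n)⁻¹)
          = (∑ j, star (Φ j * V c j)) * (Kmat φ A n)⁻¹ := by
            rw [Finset.sum_mul]
            refine Finset.sum_congr rfl fun j _ => ?_
            rw [star_mul, mul_assoc]
        _ = (Kmat φ A n)⁻¹ := by rw [← star_sum, hΦV1, star_one, one_mul]
    have h2 : ∑ j, ((Kmat φ A n)⁻¹ * Φ j) * V c j = (Kmat φ A n)⁻¹ := by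
      calc ∑ j, ((Kmat φ A n)⁻¹ * Φ j) * V c j
          = (Kmat φ A n)⁻¹ * ∑ j, Φ j * V c j := by
            rw [Finset.mul_sum]; simp_rw [mul_assoc]
        _ = (Kmat φ A n)⁻¹ := by rw [hΦV1, mul_one]
    have hsum : Mval L μ n c - (Kmat φ A n)⁻¹
        = ∑ j, star (V c j - star (Φ j) * (Kmat φ A n)⁻¹)
            * (V c j - star (Φ j) * (Kmat φ A n)⁻¹) := by
      simp_rw [expand]
      rw [Finset.sum_add_distrib, Finset.sum_sub_distrib, Finset.sum_sub_distrib,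
        h1, h2, hKinvsum, ← hMval c]
      abel
    rw [hsum]
    refine posSemidef_sum _ _ fun j _ => ?_
    rw [Matrix.star_eq_conjTranspose]
    exact Matrix.posSemidef_conjTranspose_mul_self _

/-! ### Quadratic forms and limits -/

noncomputable def qf {k : ℕ} (Λ : Matrix (Fin k) (Fin k) ℂ) (x : Fin k → ℂ) : ℂ :=
  dotProduct (star x) (Λ.mulVec x)

def ebas {k : ℕ} (i : Fin k) : Fin k → ℂ := Pi.single i 1

lemma qf_eq_sum {k : ℕ} (Λ : Matrix (Fin k) (Fin k) ℂ) (x : Fin k → ℂ) :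
    qf Λ x = ∑ p, ∑ q, star (x p) * Λ p q * x q := by
  simp [qf, dotProduct, Matrix.mulVec, Finset.mul_sum, mul_assoc]

lemma qf_tendsto {k : ℕ} (Λ : ℕ → Matrix (Fin k) (Fin k) ℂ) (X : Matrix (Fin k) (Fin k) ℂ)
    (h : ∀ i j, Filter.Tendsto (fun n => Λ n i j) Filter.atTop (nhds (X i j)))
    (x : Fin k → ℂ) :
    Filter.Tendsto (fun n => qf (Λ n) x) Filter.atTop (nhds (qf X x)) := by
  simp_rw [qf_eq_sum]
  refine tendsto_finset_sum _ fun p _ => tendsto_finset_sum _ fun q _ => ?_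
  exact ((h p q).const_mul _).mul_const _

lemma psd_of_tendsto {k : ℕ} (Λ : ℕ → Matrix (Fin k) (Fin k) ℂ) (X : Matrix (Fin k) (Fin k) ℂ)
    (h : ∀ i j, Filter.Tendsto (fun n => Λ n i j) Filter.atTop (nhds (X i j)))
    (hn : ∀ n, (Λ n).PosSemidef) : X.PosSemidef := by
  refine Matrix.PosSemidef.of_dotProduct_mulVec_nonneg ?_ ?_
  · show X.conjTranspose = X
    ext i j
    rw [Matrix.conjTranspose_apply]
    have h1 : Filter.Tendsto (fun n => star (Λ n j i)) Filter.atTop (nhds (star (X j i))) :=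
      (h j i).star
    have h2 : (fun n => star (Λ n j i)) = fun n => Λ n i j := by
      funext n
      have := (hn n).1
      calc star (Λ n j i) = (Λ n).conjTranspose i j := (Matrix.conjTranspose_apply _ _ _).symm
        _ = Λ n i j := by rw [this]
    rw [h2] at h1
    exact tendsto_nhds_unique h1 (h i j)
  · intro x
    have hq := qf_tendsto Λ X h x
    have hnn : ∀ n, 0 ≤ qf (Λ n) x := fun n => (hn n).dotProduct_mulVec_nonneg x
    rw [show dotProduct (star x) (X.mulVec x) = qf X x from rfl, Complex.le_def]
    constructor
    · have hre : Filter.Tendsto (fun n => (qf (Λ n) x).re) Filter.atTop (nhds ((qf X x).re)) :=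
        (Complex.continuous_re.tendsto _).comp hq
      simpa using ge_of_tendsto' hre fun n => by
        simpa using (Complex.le_def.mp (hnn n)).1
    · have him : Filter.Tendsto (fun n => (qf (Λ n) x).im) Filter.atTop (nhds ((qf X x).im)) :=
        (Complex.continuous_im.tendsto _).comp hq
      have h0 : (fun n => (qf (Λ n) x).im) = fun _ => (0 : ℝ) := by
        funext n
        exact ((Complex.le_def.mp (hnn n)).2).symm
      rw [h0] at him
      simpa using (tendsto_nhds_unique tendsto_const_nhds him)

lemma qf_single_c {k : ℕ} (Λ : Matrix (Fin k) (Fin k) ℂ) (i : Fin k) (c : ℂ) :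
    qf Λ (Pi.single i c) = star c * c * Λ i i := by
  rw [qf_eq_sum]
  simp [Pi.single_apply, apply_ite (star : ℂ → ℂ), ite_mul, mul_ite, Finset.sum_ite_eq,
    mul_comm, mul_assoc, mul_left_comm]

lemma qf_add_c {k : ℕ} (Λ : Matrix (Fin k) (Fin k) ℂ) (i j : Fin k) (c : ℂ) (hij : i ≠ j) :
    qf Λ (ebas i + c • ebas j)
      = Λ i i + star c * Λ j i + c * Λ i j + star c * c * Λ j j := by
  rw [qf_eq_sum]
  have hx : ∀ p, (ebas i + c • ebas j) p
      = (if p = i then 1 else 0) + c * (if p = j then 1 else 0) := by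
    intro p
    simp [ebas, Pi.single_apply]
  simp_rw [hx]
  simp only [star_add, star_mul', apply_ite (star : ℂ → ℂ), star_one, star_zero,
    add_mul, mul_add, ite_mul, mul_ite, one_mul, mul_one, zero_mul, mul_zero,
    Finset.sum_add_distrib]
  simp [Finset.sum_ite_eq, hij, Ne.symm hij, mul_comm, mul_assoc, mul_left_comm]
  simp [Finset.sum_add_distrib, Finset.sum_ite_eq', Finset.mem_univ]
  ring

lemma entry_formula {k : ℕ} (Λ : Matrix (Fin k) (Fin k) ℂ) (i j : Fin k) :
    Λ i j = (qf Λ (ebas i + ebas j) - qf Λ (ebas i) - qf Λ (ebas j)) / 2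
      - Complex.I * ((qf Λ (ebas i + Complex.I • ebas j) - qf Λ (ebas i)
        - qf Λ (ebas j)) / 2) := by
  rcases eq_or_ne i j with rfl | hij
  · have e1 : ebas (k := k) i + ebas i = Pi.single i (2 : ℂ) := by
      funext p
      simp [ebas, Pi.single_apply]
      split <;> norm_num
    have e2 : ebas (k := k) i + Complex.I • ebas i = Pi.single i (1 + Complex.I) := by
      funext p
      simp [ebas, Pi.single_apply]
      split <;> simp
    have e3 : ebas (k := k) i = Pi.single i (1 : ℂ) := rfl
    rw [e1, e2, e3, qf_single_c, qf_single_c, qf_single_c]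
    simp only [star_one, one_mul, map_add, Complex.star_def, Complex.conj_I, map_one]
    ring_nf
    simp only [show Complex.I ^ 3 = -Complex.I by rw [pow_succ, Complex.I_sq]; ring,
      Complex.I_sq, show (starRingEnd ℂ) 2 = 2 from map_ofNat _ 2]
    ring
  · have e1 : ebas (k := k) i + ebas j = ebas i + (1 : ℂ) • ebas j := by rw [one_smul]
    have e3 : ebas (k := k) i = Pi.single i (1 : ℂ) := rfl
    have e4 : ebas (k := k) j = Pi.single j (1 : ℂ) := rfl
    rw [e1, qf_add_c Λ i j 1 hij, qf_add_c Λ i j Complex.I hij, e3, e4, qf_single_c,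
      qf_single_c]
    simp only [star_one, one_mul, mul_one, Complex.star_def, Complex.conj_I]
    ring_nf
    simp only [show Complex.I ^ 3 = -Complex.I by rw [pow_succ, Complex.I_sq]; ring,
      Complex.I_sq, show (starRingEnd ℂ) 2 = 2 from map_ofNat _ 2]
    ring

/-! ### Stability of admissibility and Mval under enlarging n -/

lemma admissible_mono {d k : ℕ} (A : Fin d → Matrix (Fin k) (Fin k) ℂ) {n m : ℕ}
    (hnm : n ≤ m) {c : List (Fin d) → Matrix (Fin k) (Fin k) ℂ}
    (hc : Admissible A n c) : Admissible A m c := by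
  obtain ⟨h0, h1⟩ := hc
  refine ⟨fun τ hτ => h0 τ (by omega), ?_⟩
  rw [← h1]
  refine (Finset.sum_subset (Finset.range_subset_range.mpr (by omega)) fun l _ hl => ?_).symm
  have hn' : n < l := by
    simp only [Finset.mem_range, Nat.lt_succ_iff, not_le] at hl
    omega
  refine Finset.sum_eq_zero fun f _ => ?_
  rw [h0 (List.ofFn f) (by simpa using hn'), mul_zero]

lemma Mval_stable {d k : ℕ} {H : Type*} [NormedAddCommGroup H] [InnerProductSpace ℂ H]
    [CompleteSpace H] (L : Fin d → H →L[ℂ] H) (μ : (H →L[ℂ] H) →ₗ[ℂ] ℂ) {n m : ℕ}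
    (hnm : n ≤ m) {c : List (Fin d) → Matrix (Fin k) (Fin k) ℂ}
    (h0 : ∀ τ : List (Fin d), n < τ.length → c τ = 0) :
    Mval L μ m c = Mval (k := k) L μ n c := by
  rw [Mval, Mval]
  have inner : ∀ σ : List (Fin d),
      (∑ l' ∈ Finset.range (m + 1), ∑ g : Fin l' → Fin d,
        μ (star (Lword L σ) * Lword L (List.ofFn g)) • (star (c σ) * c (List.ofFn g)))
      = ∑ l' ∈ Finset.range (n + 1), ∑ g : Fin l' → Fin d,
        μ (star (Lword L σ) * Lword L (List.ofFn g)) • (star (c σ) * c (List.ofFn g)) := by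
    intro σ
    refine (Finset.sum_subset (Finset.range_subset_range.mpr (by omega)) fun l' _ hl' => ?_).symm
    have hn' : n < l' := by
      simp only [Finset.mem_range, Nat.lt_succ_iff, not_le] at hl'
      omega
    refine Finset.sum_eq_zero fun g _ => ?_
    rw [h0 (List.ofFn g) (by simpa using hn'), mul_zero, smul_zero]
  calc ∑ l ∈ Finset.range (m + 1), ∑ f : Fin l → Fin d,
        ∑ l' ∈ Finset.range (m + 1), ∑ g : Fin l' → Fin d,
          μ (star (Lword L (List.ofFn f)) * Lword L (List.ofFn g)) •
            (star (c (List.ofFn f)) * c (List.ofFn g))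
      = ∑ l ∈ Finset.range (m + 1), ∑ f : Fin l → Fin d,
        ∑ l' ∈ Finset.range (n + 1), ∑ g : Fin l' → Fin d,
          μ (star (Lword L (List.ofFn f)) * Lword L (List.ofFn g)) •
            (star (c (List.ofFn f)) * c (List.ofFn g)) := by
        exact Finset.sum_congr rfl fun l _ => Finset.sum_congr rfl fun f _ =>
          inner (List.ofFn f)
    _ = ∑ l ∈ Finset.range (n + 1), ∑ f : Fin l → Fin d,
        ∑ l' ∈ Finset.range (n + 1), ∑ g : Fin l' → Fin d,
          μ (star (Lword L (List.ofFn f)) * Lword L (List.ofFn g)) •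
            (star (c (List.ofFn f)) * c (List.ofFn g)) := by
        refine (Finset.sum_subset (Finset.range_subset_range.mpr (by omega)) fun l _ hl => ?_).symm
        have hn' : n < l := by
          simp only [Finset.mem_range, Nat.lt_succ_iff, not_le] at hl
          omega
        refine Finset.sum_eq_zero fun f _ => ?_
        refine Finset.sum_eq_zero fun l' _ => Finset.sum_eq_zero fun g _ => ?_
        rw [h0 (List.ofFn f) (by simpa using hn'), star_zero, zero_mul, smul_zero]

end Chr

/-- the Christoffel approximates `Λ_n(A) := K_n(A)⁻¹` form a Loewner-nonincreasing
sequence converging entrywise to a positive semidefinite matrix `Λ_∞(A)`, which is the Loewner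
infimum of the set `{M(c) : n ∈ ℕ, c n-admissible for A}`: `Λ_∞(A) ⪯ M(c)` for every such `c`,
and any Hermitian lower bound `W` of all the `M(c)` satisfies `W ⪯ Λ_∞(A)`. -/
theorem christoffel_function_exists {d k : ℕ} (hd : 1 ≤ d) (hk : 1 ≤ k)
    {H : Type*} [NormedAddCommGroup H] [InnerProductSpace ℂ H] [CompleteSpace H]
    (L : Fin d → H →L[ℂ] H)
    (hL : ∀ i j : Fin d, star (L i) * L j = if i = j then (1 : H →L[ℂ] H) else 0)
    (μ : (H →L[ℂ] H) →ₗ[ℂ] ℂ)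
    (hμ : ∀ a ∈ Algebra.adjoin ℂ (Set.range L), 0 ≤ μ (star a * a))
    (φ : List (Fin d) → FreeAlgebra ℂ (Fin d)) (hφ0 : φ [] = 1)
    (horth : ∀ σ τ : List (Fin d),
      μ (star (evalL L (φ τ)) * evalL L (φ σ)) = if σ = τ then 1 else 0)
    (hspan : ∀ n : ℕ,
      Submodule.span ℂ (φ '' {τ : List (Fin d) | τ.length ≤ n}) =
        Submodule.span ℂ
          ((fun τ : List (Fin d) => (τ.map (FreeAlgebra.ι ℂ)).prod) ''
            {τ : List (Fin d) | τ.length ≤ n}))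
    (A : Fin d → Matrix (Fin k) (Fin k) ℂ) :
    (∀ n m : ℕ, n ≤ m → ((Kmat φ A n)⁻¹ - (Kmat φ A m)⁻¹).PosSemidef) ∧
    (∃ Linf : Matrix (Fin k) (Fin k) ℂ, Linf.PosSemidef ∧
      (∀ i j : Fin k,
        Filter.Tendsto (fun n : ℕ => (Kmat φ A n)⁻¹ i j) Filter.atTop (nhds (Linf i j))) ∧
      (∀ (n : ℕ) (c : List (Fin d) → Matrix (Fin k) (Fin k) ℂ), Admissible A n c →
        (Mval L μ n c - Linf).PosSemidef) ∧
      (∀ W : Matrix (Fin k) (Fin k) ℂ, W.IsHermitian →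
        (∀ (n : ℕ) (c : List (Fin d) → Matrix (Fin k) (Fin k) ℂ), Admissible A n c →
          (Mval L μ n c - W).PosSemidef) →
        (Linf - W).PosSemidef)) := by
  
  classical
  have hcore := fun n => Chr.core L μ φ hφ0 horth hspan A n
  have hpd : ∀ n, (Kmat φ A n).PosDef := fun n => (hcore n).1
  choose copt hcopt using fun n => (hcore n).2.1
  have hineq : ∀ n c, Admissible A n c → (Mval L μ n c - (Kmat φ A n)⁻¹).PosSemidef :=
    fun n => (hcore n).2.2
  set Λ : ℕ → Matrix (Fin k) (Fin k) ℂ := fun n => (Kmat φ A n)⁻¹ with hΛ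
  have hmono : ∀ n m, n ≤ m → (Λ n - Λ m).PosSemidef := by
    intro n m hnm
    have h1 : Admissible A m (copt n) := Chr.admissible_mono A hnm (hcopt n).1
    have h2 : Mval L μ m (copt n) = Λ n := by
      rw [Chr.Mval_stable L μ hnm (hcopt n).1.1, (hcopt n).2]
    have h3 := hineq m (copt n) h1
    rwa [h2] at h3
  have hpsd : ∀ n, (Λ n).PosSemidef := fun n => (hpd n).inv.posSemidef
  have hqlim : ∀ x : Fin k → ℂ, ∃ r : ℝ,
      Filter.Tendsto (fun n => Chr.qf (Λ n) x) Filter.atTop (nhds ((r : ℝ) : ℂ)) := by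
    intro x
    have hnn : ∀ n, (0 : ℂ) ≤ Chr.qf (Λ n) x := fun n => (hpsd n).dotProduct_mulVec_nonneg x
    have hreal : ∀ n, Chr.qf (Λ n) x = (((Chr.qf (Λ n) x).re : ℝ) : ℂ) := by
      intro n
      have h2 := (Complex.le_def.mp (hnn n)).2
      apply Complex.ext
      · simp
      · simpa using h2.symm
    have hanti : Antitone fun n => (Chr.qf (Λ n) x).re := by
      intro n m hnm
      have h := (hmono n m hnm).dotProduct_mulVec_nonneg x
      have hsub : dotProduct (star x) ((Λ n - Λ m).mulVec x)
          = Chr.qf (Λ n) x - Chr.qf (Λ m) x := by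
        simp [Chr.qf, Matrix.sub_mulVec, dotProduct_sub]
      rw [hsub] at h
      have := (Complex.le_def.mp h).1
      simp only [Complex.zero_re, Complex.sub_re] at this
      linarith
    have hbdd : BddBelow (Set.range fun n => (Chr.qf (Λ n) x).re) := by
      refine ⟨0, ?_⟩
      rintro r ⟨n, rfl⟩
      simpa using (Complex.le_def.mp (hnn n)).1
    refine ⟨⨅ n, (Chr.qf (Λ n) x).re, ?_⟩
    have h1 := tendsto_atTop_ciInf hanti hbdd
    have h2 : Filter.Tendsto (fun n => (((Chr.qf (Λ n) x).re : ℝ) : ℂ)) Filter.atTop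
        (nhds ((⨅ n, (Chr.qf (Λ n) x).re : ℝ) : ℂ)) :=
      (Complex.continuous_ofReal.tendsto _).comp h1
    have h3 : (fun n => (((Chr.qf (Λ n) x).re : ℝ) : ℂ)) = fun n => Chr.qf (Λ n) x := by
      funext n
      exact (hreal n).symm
    rwa [h3] at h2
  choose Qlim hQlim using hqlim
  set Linf : Matrix (Fin k) (Fin k) ℂ := Matrix.of fun i j =>
    (((Qlim (Chr.ebas i + Chr.ebas j) : ℝ) : ℂ) - ((Qlim (Chr.ebas i) : ℝ) : ℂ)
        - ((Qlim (Chr.ebas j) : ℝ) : ℂ)) / 2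
      - Complex.I * ((((Qlim (Chr.ebas i + Complex.I • Chr.ebas j) : ℝ) : ℂ)
        - ((Qlim (Chr.ebas i) : ℝ) : ℂ) - ((Qlim (Chr.ebas j) : ℝ) : ℂ)) / 2) with hLinfdef
  have hentry : ∀ i j, Filter.Tendsto (fun n => Λ n i j) Filter.atTop (nhds (Linf i j)) := by
    intro i j
    have hrw : (fun n => Λ n i j) = fun n =>
        (Chr.qf (Λ n) (Chr.ebas i + Chr.ebas j) - Chr.qf (Λ n) (Chr.ebas i)
          - Chr.qf (Λ n) (Chr.ebas j)) / 2
        - Complex.I * ((Chr.qf (Λ n) (Chr.ebas i + Complex.I • Chr.ebas j)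
          - Chr.qf (Λ n) (Chr.ebas i) - Chr.qf (Λ n) (Chr.ebas j)) / 2) :=
      funext fun n => Chr.entry_formula (Λ n) i j
    rw [hrw]
    have t1 := hQlim (Chr.ebas i + Chr.ebas j)
    have t2 := hQlim (Chr.ebas i)
    have t3 := hQlim (Chr.ebas j)
    have t4 := hQlim (Chr.ebas i + Complex.I • Chr.ebas j)
    have : Linf i j = (((Qlim (Chr.ebas i + Chr.ebas j) : ℝ) : ℂ)
        - ((Qlim (Chr.ebas i) : ℝ) : ℂ) - ((Qlim (Chr.ebas j) : ℝ) : ℂ)) / 2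
      - Complex.I * ((((Qlim (Chr.ebas i + Complex.I • Chr.ebas j) : ℝ) : ℂ)
        - ((Qlim (Chr.ebas i) : ℝ) : ℂ) - ((Qlim (Chr.ebas j) : ℝ) : ℂ)) / 2) := rfl
    rw [this]
    exact (((t1.sub t2).sub t3).div_const 2).sub
      ((((t4.sub t2).sub t3).div_const 2).const_mul Complex.I)
  refine ⟨fun n m hnm => hmono n m hnm, Linf, ?_, hentry, ?_, ?_⟩
  · exact Chr.psd_of_tendsto Λ Linf hentry hpsd
  · intro n c hc
    have h1 := hineq n c hc
    have h2 : (Λ n - Linf).PosSemidef := by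
      refine Chr.psd_of_tendsto (fun m => Λ n - Λ (n + m)) (Λ n - Linf) ?_ ?_
      · intro i j
        have ht : Filter.Tendsto (fun m => Λ (n + m) i j) Filter.atTop (nhds (Linf i j)) := by
          have := (hentry i j).comp (Filter.tendsto_add_atTop_nat n)
          refine this.congr fun m => ?_
          show Λ (m + n) i j = Λ (n + m) i j
          rw [Nat.add_comm]
        have := Filter.Tendsto.sub (tendsto_const_nhds (x := Λ n i j)) ht
        simpa [Matrix.sub_apply] using this
      · intro m
        exact hmono n (n + m) (Nat.le_add_right n m)
    have h3 := h1.add h2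
    have e : Mval L μ n c - (Kmat φ A n)⁻¹ + (Λ n - Linf) = Mval L μ n c - Linf :=
      sub_add_sub_cancel _ _ _
    rw [e] at h3
    exact h3
  · intro W hW hWle
    have hn : ∀ n, (Λ n - W).PosSemidef := by
      intro n
      have := hWle n (copt n) (hcopt n).1
      rwa [(hcopt n).2] at this
    refine Chr.psd_of_tendsto (fun n => Λ n - W) (Linf - W) ?_ hn
    intro i j
    have := Filter.Tendsto.sub (hentry i j) (tendsto_const_nhds (x := W i j))
    simpa [Matrix.sub_apply] using this
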